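/- Let X and Y be independent random variables, each with the binomial distribution Bin(n, 1/2). Then P(X = Y) < 1/√(πn), and there is a constant K > 0 (independent of n) such that P(X = Y) ≥ (1/√(πn))·(1 − 1/(8n)) − K/n^{5/2} for all n ≥ 1. -/

import Mathlib

open MeasureTheory ProbabilityTheory

namespace BinColl

open Real Filter Nat Topology Stirling

lemma step_upper (m : ℕ) :
    Real.log (stirlingSeq (m + 1)) - Real.log (stirlingSeq (m + 2)) ≤
      1 / (12 * ((m : ℝ) + 1)) - 1 / (12 * ((m : ℝ) + 2)) := by
  have hs := Stirling.log_stirlingSeq_diff_hasSum m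
  set t2 : ℝ := (1 / (2 * ((m : ℕ) + 1 : ℕ) + 1 : ℝ)) ^ 2 with ht2
  have ht2' : t2 = (1 / (2 * ((m : ℝ) + 1) + 1)) ^ 2 := by rw [ht2]; push_cast; ring
  have hm : (0 : ℝ) ≤ m := Nat.cast_nonneg m
  have ht2pos : 0 ≤ t2 := sq_nonneg _
  have ht2lt : t2 < 1 := by
    rw [ht2', div_pow, one_pow, div_lt_one (by positivity)]
    nlinarith
  have hgeo : HasSum (fun k : ℕ => (1 / 3 : ℝ) * t2 ^ (k + 1))
      (1 / 3 * (t2 / (1 - t2))) := by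
    have h := ((hasSum_geometric_of_lt_one ht2pos ht2lt).mul_left t2).mul_left (1 / 3 : ℝ)
    have e : (fun k : ℕ => (1 / 3 : ℝ) * t2 ^ (k + 1)) = fun i => 1 / 3 * (t2 * t2 ^ i) := by
      funext k; rw [← _root_.pow_succ']
    rw [e, div_eq_mul_inv]; exact h
  have hle := hasSum_le (fun k => ?_) hs hgeo
  · refine hle.trans (le_of_eq ?_)
    have h2 : (0:ℝ) < 1 - t2 := by linarith
    have key : t2 / (1 - t2) = 1 / (4 * ((m:ℝ) + 1) * ((m:ℝ) + 2)) := by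
      rw [div_eq_div_iff h2.ne' (by positivity), ht2']
      field_simp
      ring
    rw [key]
    field_simp
    ring
  · apply mul_le_mul_of_nonneg_right _ (pow_nonneg ht2pos _)
    rw [div_le_div_iff₀ (by positivity) (by norm_num)]
    push_cast
    nlinarith [Nat.cast_nonneg (α := ℝ) k]

lemma step_lower (m : ℕ) :
    1 / (6 * (2 * ((m : ℝ) + 1) + 1)) - 1 / (6 * (2 * ((m : ℝ) + 2) + 1)) ≤
      Real.log (stirlingSeq (m + 1)) - Real.log (stirlingSeq (m + 2)) := by
  have hs := Stirling.log_stirlingSeq_diff_hasSum m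
  have hm : (0 : ℝ) ≤ m := Nat.cast_nonneg m
  have hterm := le_hasSum hs 0 (fun k _ => by positivity)
  refine le_trans ?_ hterm
  have hA : (0:ℝ) < 2 * ((m:ℝ) + 1) + 1 := by positivity
  have heq : (1:ℝ) / (2 * ((0:ℕ) + 1 : ℕ) + 1 : ℝ) *
      ((1 / (2 * ((m:ℕ) + 1 : ℕ) + 1 : ℝ)) ^ 2) ^ ((0:ℕ) + 1) =
      1 / (3 * (2 * ((m:ℝ) + 1) + 1) ^ 2) := by
    push_cast
    rw [pow_one, div_pow, one_pow, one_div_mul_one_div]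
    norm_num
  rw [heq, div_sub_div _ _ (by positivity) (by positivity),
    div_le_div_iff₀ (by positivity) (by positivity)]
  ring_nf
  nlinarith

lemma sum_upper : ∀ (N n : ℕ), 1 ≤ n → n ≤ N →
    Real.log (stirlingSeq n) - Real.log (stirlingSeq N) ≤
      1 / (12 * (n : ℝ)) - 1 / (12 * (N : ℝ)) := by
  intro N
  induction N with
  | zero => intro n h1 h2; omega
  | succ N ih =>
    intro n h1 h2
    rcases eq_or_lt_of_le h2 with rfl | h
    · simp
    · have hnN : n ≤ N := by omega
      have hN1 : 1 ≤ N := le_trans h1 hnN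
      have H := ih n h1 hnN
      obtain ⟨M, rfl⟩ : ∃ M, N = M + 1 := ⟨N - 1, by omega⟩
      have hstep := step_upper M
      have : ((M + 1 + 1 : ℕ) : ℝ) = (M : ℝ) + 2 := by push_cast; ring
      rw [this]
      have : ((M + 1 : ℕ) : ℝ) = (M : ℝ) + 1 := by push_cast; ring
      rw [this] at H
      linarith

lemma sum_lower : ∀ (N n : ℕ), 1 ≤ n → n ≤ N →
    1 / (6 * (2 * (n : ℝ) + 1)) - 1 / (6 * (2 * (N : ℝ) + 1)) ≤
      Real.log (stirlingSeq n) - Real.log (stirlingSeq N) := by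
  intro N
  induction N with
  | zero => intro n h1 h2; omega
  | succ N ih =>
    intro n h1 h2
    rcases eq_or_lt_of_le h2 with rfl | h
    · simp
    · have hnN : n ≤ N := by omega
      have hN1 : 1 ≤ N := le_trans h1 hnN
      have H := ih n h1 hnN
      obtain ⟨M, rfl⟩ : ∃ M, N = M + 1 := ⟨N - 1, by omega⟩
      have hstep := step_lower M
      have : ((M + 1 + 1 : ℕ) : ℝ) = (M : ℝ) + 2 := by push_cast; ring
      rw [this]
      have : ((M + 1 : ℕ) : ℝ) = (M : ℝ) + 1 := by push_cast; ring
      rw [this] at H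
      linarith

lemma tendsto_log_stirling :
    Tendsto (fun N : ℕ => Real.log (stirlingSeq N)) atTop (𝓝 (Real.log (√π))) :=
  ((Real.continuousAt_log (by positivity)).tendsto.comp tendsto_stirlingSeq_sqrt_pi)

lemma theta_upper (n : ℕ) (hn : 1 ≤ n) :
    Real.log (stirlingSeq n) - Real.log (√π) ≤ 1 / (12 * (n : ℝ)) := by
  have h : Tendsto (fun N : ℕ => Real.log (stirlingSeq n) - Real.log (stirlingSeq N)) atTop
      (𝓝 (Real.log (stirlingSeq n) - Real.log (√π))) := tendsto_const_nhds.sub tendsto_log_stirling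
  refine le_of_tendsto h ?_
  filter_upwards [eventually_ge_atTop n] with N hN
  have h1 := sum_upper N n hn hN
  have h2 : (0:ℝ) ≤ 1 / (12 * (N : ℝ)) := by positivity
  linarith

lemma theta_lower (n : ℕ) (hn : 1 ≤ n) :
    1 / (6 * (2 * (n : ℝ) + 1)) ≤ Real.log (stirlingSeq n) - Real.log (√π) := by
  have h : Tendsto (fun N : ℕ => Real.log (stirlingSeq n) - Real.log (stirlingSeq N)) atTop
      (𝓝 (Real.log (stirlingSeq n) - Real.log (√π))) := tendsto_const_nhds.sub tendsto_log_stirling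
  have h0 : Tendsto (fun N : ℕ => 1 / (6 * (2 * (N : ℝ) + 1))) atTop (𝓝 0) := by
    simp only [one_div]
    apply Tendsto.inv_tendsto_atTop
    apply tendsto_atTop_mono (fun N : ℕ => ?_) tendsto_natCast_atTop_atTop
    have : (0:ℝ) ≤ N := Nat.cast_nonneg N
    nlinarith
  have h1 : Tendsto (fun N : ℕ => 1 / (6 * (2 * (n : ℝ) + 1)) - 1 / (6 * (2 * (N : ℝ) + 1)))
      atTop (𝓝 (1 / (6 * (2 * (n : ℝ) + 1)) - 0)) := tendsto_const_nhds.sub h0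
  rw [sub_zero] at h1
  refine le_of_tendsto_of_tendsto h1 h ?_
  filter_upwards [eventually_ge_atTop n] with N hN
  exact sum_lower N n hn hN


lemma sum_choose_sq (n : ℕ) :
    ∑ k ∈ Finset.range (n + 1), (n.choose k) ^ 2 = Nat.centralBinom n := by
  rw [Nat.centralBinom, two_mul, Nat.add_choose_eq,
    Finset.Nat.sum_antidiagonal_eq_sum_range_succ_mk]
  refine Finset.sum_congr rfl fun k hk => ?_
  rw [sq, Nat.choose_symm (Finset.mem_range_succ_iff.mp hk)]

lemma central_eq (n : ℕ) (hn : 1 ≤ n) :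
    (Nat.centralBinom n : ℝ) / 4 ^ n =
      stirlingSeq (2 * n) / (stirlingSeq n ^ 2 * Real.sqrt n) := by
  have hn0 : (0 : ℝ) < n := by exact_mod_cast hn
  have hfac : (0:ℝ) < (n ! : ℝ) := by exact_mod_cast n.factorial_pos
  have hsq : Real.sqrt n * Real.sqrt n = (n : ℝ) := Real.mul_self_sqrt hn0.le
  have hsn : (0:ℝ) < Real.sqrt n := Real.sqrt_pos.mpr hn0
  have he : (0:ℝ) < Real.exp 1 := Real.exp_pos 1
  have hc : ((Nat.centralBinom n : ℕ) : ℝ) = (2 * n)! / ((n)! * (n)!) := by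
    rw [Nat.centralBinom, Nat.cast_choose ℝ (by omega : n ≤ 2 * n),
      show 2 * n - n = n from by omega]
  have h2n : ((2 * n : ℕ) : ℝ) = 2 * (n : ℝ) := by push_cast; ring
  have e1 : Real.sqrt (2 * ((2 * n : ℕ) : ℝ)) = 2 * Real.sqrt n := by
    rw [h2n, show (2 : ℝ) * (2 * (n:ℝ)) = 2 ^ 2 * (n:ℝ) by ring,
      Real.sqrt_mul (by positivity), Real.sqrt_sq (by norm_num)]
  have e2 : (((2 * n : ℕ) : ℝ) / Real.exp 1) ^ (2 * n)
      = 4 ^ n * ((n : ℝ) / Real.exp 1) ^ (2 * n) := by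
    rw [h2n, show (2 * (n:ℝ)) / Real.exp 1 = 2 * ((n:ℝ) / Real.exp 1) by ring,
      mul_pow, show ((2:ℝ)) ^ (2 * n) = 4 ^ n by rw [pow_mul]; norm_num]
  rw [stirlingSeq, stirlingSeq, hc, e1, e2]
  have hpow : (0:ℝ) < ((n:ℝ) / Real.exp 1) ^ n := by positivity
  have hfact2 : (0:ℝ) < ((2 * n)! : ℝ) := by exact_mod_cast (2 * n).factorial_pos
  have hpow2 : ((n:ℝ) / Real.exp 1) ^ (2 * n) = (((n:ℝ) / Real.exp 1) ^ n) ^ 2 := by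
    rw [← pow_mul, mul_comm]
  rw [hpow2]
  have hsqrt2n : (0:ℝ) < Real.sqrt (2 * (n:ℝ)) := by positivity
  field_simp
  ring_nf
  rw [Real.sq_sqrt (by positivity : (0:ℝ) ≤ n), Real.sq_sqrt (by positivity : (0:ℝ) ≤ n * 2)]


lemma collision_toReal (n : ℕ) (Ω : Type) (mΩ : MeasurableSpace Ω) (μ : Measure Ω)
    (X Y : Ω → ℕ) (hX : Measurable X) (hY : Measurable Y) (hXY : IndepFun X Y μ)
    (hpX : ∀ k : ℕ, μ {ω | X ω = k} = ENNReal.ofReal ((n.choose k : ℝ) / 2 ^ n))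
    (hpY : ∀ k : ℕ, μ {ω | Y ω = k} = ENNReal.ofReal ((n.choose k : ℝ) / 2 ^ n)) :
    (μ {ω | X ω = Y ω}).toReal = (Nat.centralBinom n : ℝ) / 4 ^ n := by
  have hset : {ω | X ω = Y ω} = ⋃ k : ℕ, (X ⁻¹' {k} ∩ Y ⁻¹' {k}) := by
    ext ω
    simp only [Set.mem_setOf_eq, Set.mem_iUnion, Set.mem_inter_iff, Set.mem_preimage,
      Set.mem_singleton_iff]
    exact ⟨fun h => ⟨Y ω, h, rfl⟩, fun ⟨k, h1, h2⟩ => h1.trans h2.symm⟩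
  have hdisj : Pairwise (Function.onFun Disjoint fun k : ℕ => X ⁻¹' {k} ∩ Y ⁻¹' {k}) := by
    intro i j hij
    refine Set.disjoint_left.mpr fun ω h1 h2 => hij ?_
    exact h1.1.symm.trans h2.1
  have hmeas : ∀ k : ℕ, MeasurableSet (X ⁻¹' {k} ∩ Y ⁻¹' {k}) := fun k =>
    (hX (measurableSet_singleton k)).inter (hY (measurableSet_singleton k))
  have key : μ {ω | X ω = Y ω} =
      ENNReal.ofReal ((Nat.centralBinom n : ℝ) / 4 ^ n) := by
    rw [hset, measure_iUnion hdisj hmeas]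
    have hterm : ∀ k : ℕ, μ (X ⁻¹' {k} ∩ Y ⁻¹' {k}) =
        ENNReal.ofReal (((n.choose k : ℝ) / 2 ^ n) ^ 2) := by
      intro k
      rw [(indepFun_iff_measure_inter_preimage_eq_mul.mp hXY) {k} {k}
        (measurableSet_singleton k) (measurableSet_singleton k)]
      have h1 : μ (X ⁻¹' {k}) = ENNReal.ofReal ((n.choose k : ℝ) / 2 ^ n) := hpX k
      have h2 : μ (Y ⁻¹' {k}) = ENNReal.ofReal ((n.choose k : ℝ) / 2 ^ n) := hpY k
      rw [h1, h2, ← ENNReal.ofReal_mul (by positivity), sq]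
    simp_rw [hterm]
    rw [tsum_eq_sum (s := Finset.range (n + 1))
      (fun k hk => by
        have hk' : n < k := by
          have := Finset.mem_range.not.mp hk
          omega
        rw [Nat.choose_eq_zero_of_lt hk']
        norm_num)]
    rw [← ENNReal.ofReal_sum_of_nonneg (fun k _ => by positivity)]
    congr 1
    have : ∀ k ∈ Finset.range (n + 1), ((n.choose k : ℝ) / 2 ^ n) ^ 2
        = (n.choose k : ℝ) ^ 2 / 4 ^ n := by
      intro k _
      rw [div_pow]
      congr 1
      rw [← pow_mul, mul_comm, pow_mul]
      norm_num
    rw [Finset.sum_congr rfl this, ← Finset.sum_div]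
    congr 1
    rw [← sum_choose_sq n]
    push_cast
    ring
  rw [key, ENNReal.toReal_ofReal (by positivity)]


lemma aux_c (x : ℝ) (hx : 1 ≤ x) :
    1 / (6 * (4 * x + 1)) - 1 / (6 * x) ≥ -(1 / (8 * x)) - 1 / (96 * x ^ 2) := by
  have hx0 : 0 < x := by linarith
  have key : 1 / (6 * (4 * x + 1)) - 1 / (6 * x) + 1 / (8 * x) + 1 / (96 * x ^ 2)
      = 1 / (96 * x ^ 2 * (4 * x + 1)) := by
    field_simp
    ring
  have hpos : 0 < 1 / (96 * x ^ 2 * (4 * x + 1)) := by positivity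
  linarith


end BinColl

open Real Filter Nat Topology MeasureTheory ProbabilityTheory BinColl Stirling

set_option maxHeartbeats 1000000 in
/-- If `X` and `Y` are independent `Bin(n, 1/2)` random variables, then
`P(X = Y) < 1/√(πn)`, and there is a constant `K > 0` independent of `n` with
`P(X = Y) ≥ (1/√(πn)) (1 - 1/(8n)) - K/n^{5/2}` for all `n ≥ 1`. -/
theorem binomial_collision_probability :
    ∃ K : ℝ, 0 < K ∧
      ∀ (n : ℕ), 1 ≤ n →
        ∀ (Ω : Type) (_ : MeasurableSpace Ω) (μ : Measure Ω), IsProbabilityMeasure μ →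
        ∀ (X Y : Ω → ℕ), Measurable X → Measurable Y → IndepFun X Y μ →
          (∀ k : ℕ, μ {ω | X ω = k} = ENNReal.ofReal ((n.choose k : ℝ) / 2 ^ n)) →
          (∀ k : ℕ, μ {ω | Y ω = k} = ENNReal.ofReal ((n.choose k : ℝ) / 2 ^ n)) →
          (μ {ω | X ω = Y ω}).toReal < 1 / Real.sqrt (Real.pi * n) ∧
          (μ {ω | X ω = Y ω}).toReal ≥
            (1 / Real.sqrt (Real.pi * n)) * (1 - 1 / (8 * n)) - K / (n : ℝ) ^ ((5 : ℝ) / 2) := by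
  refine ⟨1, one_pos, ?_⟩
  intro n hn Ω mΩ μ hμ X Y hX hY hXY hpX hpY
  have hP := collision_toReal n Ω mΩ μ X Y hX hY hXY hpX hpY
  rw [hP, central_eq n hn]
  obtain ⟨m, rfl⟩ : ∃ m, n = m + 1 := ⟨n - 1, by omega⟩
  set n := m + 1
  have hn0 : (0 : ℝ) < n := by positivity
  have hsnpos : 0 < stirlingSeq n := stirlingSeq'_pos m
  have hs2npos : 0 < stirlingSeq (2 * n) := by
    have : 2 * n = (2 * m + 1) + 1 := by omega
    rw [this]; exact stirlingSeq'_pos _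
  have hsqpi : (0 : ℝ) < √π := Real.sqrt_pos.mpr pi_pos
  have hsqn : (0 : ℝ) < √(n : ℝ) := Real.sqrt_pos.mpr hn0
  have hsplit : Real.sqrt (π * n) = √π * √(n : ℝ) := Real.sqrt_mul pi_pos.le _
  set a := Real.log (stirlingSeq n) - Real.log (√π) with ha_def
  set b := Real.log (stirlingSeq (2 * n)) - Real.log (√π) with hb_def
  have ha1 : a ≤ 1 / (12 * (n : ℝ)) := theta_upper n (by omega)
  have ha2 : 1 / (6 * (2 * (n : ℝ) + 1)) ≤ a := theta_lower n (by omega)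
  have hb2 : 1 / (6 * (2 * ((2 * n : ℕ) : ℝ) + 1)) ≤ b := theta_lower (2 * n) (by omega)
  have hcast : ((2 * n : ℕ) : ℝ) = 2 * (n : ℝ) := by push_cast; ring
  rw [hcast] at hb2
  have hsn_eq : stirlingSeq n = √π * Real.exp a := by
    rw [ha_def, Real.exp_sub, Real.exp_log hsnpos, Real.exp_log hsqpi]
    field_simp
  have hs2n_eq : stirlingSeq (2 * n) = √π * Real.exp b := by
    rw [hb_def, Real.exp_sub, Real.exp_log hs2npos, Real.exp_log hsqpi]
    field_simp
  constructor
  · -- upper bound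
    have hpi_lt : √π < stirlingSeq n := by
      have hpos : 0 < 1 / (6 * (2 * (n : ℝ) + 1)) := by positivity
      have hlog : Real.log (√π) < Real.log (stirlingSeq n) := by linarith
      exact (Real.log_lt_log_iff hsqpi hsnpos).mp hlog
    have hle : stirlingSeq (2 * n) ≤ stirlingSeq n := by
      have h := stirlingSeq'_antitone (show m ≤ 2 * m + 1 by omega)
      simpa [Function.comp, show (2 * m + 1) + 1 = 2 * n by omega] using h
    rw [hsplit, div_lt_div_iff₀ (by positivity) (by positivity)]
    have k1 : stirlingSeq (2 * n) * √π < stirlingSeq n * stirlingSeq n := by nlinarith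
    nlinarith [mul_lt_mul_of_pos_right k1 hsqn]
  · -- lower bound
    have hratio : stirlingSeq (2 * n) / (stirlingSeq n ^ 2 * √(n : ℝ)) =
        Real.exp (b - 2 * a) / (√π * √(n : ℝ)) := by
      have hbb : Real.exp (b - 2 * a) = Real.exp b / (Real.exp a * Real.exp a) := by
        rw [Real.exp_sub, two_mul, Real.exp_add]
      rw [hsn_eq, hs2n_eq, hbb]
      have h1 : Real.exp a ≠ 0 := Real.exp_ne_zero a
      have h2 : Real.exp b ≠ 0 := Real.exp_ne_zero b
      field_simp
    rw [hratio, hsplit]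
    have hc : b - 2 * a ≥ -(1 / (8 * (n : ℝ))) - 1 / (96 * (n : ℝ) ^ 2) := by
      have := aux_c (n : ℝ) (by exact_mod_cast hn)
      have h12 : 2 * (1 / (12 * (n : ℝ))) = 1 / (6 * (n : ℝ)) := by
        rw [eq_div_iff (by positivity)]
        field_simp
        ring
      rw [show (2:ℝ) * (2 * (n:ℝ)) = 4 * (n:ℝ) by ring] at hb2
      linarith
    have hexp : Real.exp (b - 2 * a) ≥ 1 - 1 / (8 * (n : ℝ)) - 1 / (96 * (n : ℝ) ^ 2) := by
      have := Real.add_one_le_exp (b - 2 * a)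
      linarith
    have h5 : (n : ℝ) ^ ((5 : ℝ) / 2) = (n : ℝ) ^ 2 * √(n : ℝ) := by
      rw [show ((5 : ℝ) / 2) = 2 + (1 / 2 : ℝ) by norm_num, Real.rpow_add hn0,
        Real.rpow_two, Real.sqrt_eq_rpow]
    have hπ1 : (1 : ℝ) ≤ √π := by
      rw [show (1 : ℝ) = √1 by simp]
      exact Real.sqrt_le_sqrt (by linarith [Real.pi_gt_three])
    have e1 : (1 - 1 / (8 * (n : ℝ)) - 1 / (96 * (n : ℝ) ^ 2)) / (√π * √(n : ℝ)) ≤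
        Real.exp (b - 2 * a) / (√π * √(n : ℝ)) := by
      gcongr
    have e2 : (1 - 1 / (8 * (n : ℝ)) - 1 / (96 * (n : ℝ) ^ 2)) / (√π * √(n : ℝ)) =
        1 / (√π * √(n : ℝ)) * (1 - 1 / (8 * (n : ℝ)))
          - (1 / (96 * (n : ℝ) ^ 2)) / (√π * √(n : ℝ)) := by
      ring
    have e3 : (1 / (96 * (n : ℝ) ^ 2)) / (√π * √(n : ℝ)) ≤ 1 / (n : ℝ) ^ ((5 : ℝ) / 2) := by
      rw [h5, div_div]
      apply one_div_le_one_div_of_le (by positivity)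
      nlinarith [sq_nonneg ((n:ℝ) - 1), mul_pos (mul_pos hn0 hn0) hsqn]
    linarith
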